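/- For natural numbers p ≥ q ≥ 1, the set W_{p,q} of p×q complex matrices of full rank q is path-connected. -/

import Mathlib

open Matrix Polynomial

lemma rank_eq_iff_inj {p q : ℕ} (A : Matrix (Fin p) (Fin q) ℂ) :
    A.rank = q ↔ Function.Injective A.mulVecLin := by
  rw [Matrix.rank, ← LinearMap.ker_eq_bot]
  have h := LinearMap.finrank_range_add_finrank_ker A.mulVecLin
  rw [Module.finrank_fintype_fun_eq_card, Fintype.card_fin] at h
  constructor
  · intro hr
    have : Module.finrank ℂ (LinearMap.ker A.mulVecLin) = 0 := by omega
    exact Submodule.finrank_eq_zero.mp this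
  · intro hk
    rw [hk] at h
    simpa using h

/-- For `p ≥ q ≥ 1`, the set `W_{p,q}` of `p×q` complex matrices of full rank `q`
is path-connected. -/
theorem isPathConnected_full_rank_matrices (p q : ℕ) (hq : 1 ≤ q) (hpq : q ≤ p) :
    IsPathConnected {A : Matrix (Fin p) (Fin q) ℂ | A.rank = q} := by
  set W := {A : Matrix (Fin p) (Fin q) ℂ | A.rank = q}
  -- base point
  set E : Matrix (Fin p) (Fin q) ℂ := Matrix.of fun i j => if i = Fin.castLE hpq j then 1 else 0
    with hEdef
  have hEinj : Function.Injective E.mulVecLin := by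
    rw [← LinearMap.ker_eq_bot, LinearMap.ker_eq_bot']
    intro v hv
    funext j
    have := congrFun hv (Fin.castLE hpq j)
    simp only [Matrix.mulVecLin_apply, Matrix.mulVec, dotProduct, hEdef,
      Matrix.of_apply, Pi.zero_apply] at this
    rw [Finset.sum_eq_single j] at this
    · simpa using this
    · intro b _ hb
      rw [if_neg, zero_mul]
      exact fun h => hb ((Fin.castLE_injective hpq) h).symm
    · simp
  have hE : E ∈ W := (rank_eq_iff_inj E).mpr hEinj
  refine ⟨E, hE, ?_⟩
  intro B hB
  -- left inverse L of E
  obtain ⟨g, hg⟩ := LinearMap.exists_leftInverse_of_injective E.mulVecLin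
    (LinearMap.ker_eq_bot.mpr hEinj)
  set L : Matrix (Fin q) (Fin p) ℂ := LinearMap.toMatrix' g with hL
  have hLE : L * E = 1 := by
    apply Matrix.toLin'.injective
    rw [Matrix.toLin'_mul, hL, Matrix.toLin'_toMatrix', Matrix.toLin'_one,
      Matrix.toLin'_apply', hg]
  -- the path in matrix space
  set f : ℂ → Matrix (Fin p) (Fin q) ℂ := fun t => E + t • (B - E) with hf
  -- the determinant polynomial
  set M : Matrix (Fin q) (Fin q) ℂ[X] :=
    Matrix.of fun i j => C ((L * E) i j) + C ((L * (B - E)) i j) * X with hM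
  have heval : ∀ t : ℂ, (M.det).eval t = (L * f t).det := by
    intro t
    have h4 : M.map (evalRingHom t) = L * f t := by
      ext i j
      simp only [Matrix.map_apply, hM, Matrix.of_apply, map_add, _root_.map_mul, coe_evalRingHom,
        eval_add, eval_mul, eval_C, eval_X]
      simp only [hf, Matrix.mul_add, Matrix.mul_smul, Matrix.add_apply, Matrix.smul_apply,
        smul_eq_mul]
      ring
    calc (M.det).eval t = (evalRingHom t) M.det := rfl
      _ = (M.map (evalRingHom t)).det := by rw [RingHom.map_det, RingHom.mapMatrix_apply]
      _ = (L * f t).det := by rw [h4]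
  have hP0 : (M.det).eval 0 = 1 := by
    rw [heval 0]
    simp [hf, hLE]
  have hPne : M.det ≠ 0 := fun h => by simp [h] at hP0
  -- bad set
  set S : Set ℂ := {t | (M.det).IsRoot t} \ {1} with hS
  have hScount : S.Countable := ((Polynomial.finite_setOf_isRoot hPne).diff (t := {1})).countable
  have hconn : IsPathConnected Sᶜ :=
    hScount.isPathConnected_compl_of_one_lt_rank (by rw [Complex.rank_real_complex]; norm_num)
  have h0 : (0 : ℂ) ∈ Sᶜ := by
    simp only [hS, Set.mem_compl_iff, Set.mem_diff, Set.mem_setOf_eq, not_and]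
    intro h
    exact absurd (by simpa [Polynomial.IsRoot] using h) (by simp [hP0])
  have h1 : (1 : ℂ) ∈ Sᶜ := by simp [hS]
  have hjoin : JoinedIn Sᶜ (0 : ℂ) 1 := hconn.joinedIn 0 h0 1 h1
  have hfc : Continuous f := by
    apply continuous_const.add
    exact continuous_id.smul continuous_const
  have him : f '' Sᶜ ⊆ W := by
    rintro _ ⟨t, ht, rfl⟩
    rcases eq_or_ne t 1 with rfl | ht1
    · simpa [hf] using hB
    · have hroot : ¬ (M.det).IsRoot t := fun h => ht ⟨h, ht1⟩
      have hdet : (L * f t).det ≠ 0 := by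
        rw [← heval]; exact hroot
      refine (rank_eq_iff_inj (f t)).mpr ?_
      rw [← LinearMap.ker_eq_bot, LinearMap.ker_eq_bot']
      intro v hv
      have h2 : (L * f t) *ᵥ v = 0 := by
        rw [← Matrix.mulVec_mulVec]
        simpa [Matrix.mulVecLin_apply] using congrArg (L *ᵥ ·) hv
      have h3 := congrArg ((L * f t)⁻¹ *ᵥ ·) h2
      simpa [Matrix.mulVec_mulVec, Matrix.nonsing_inv_mul _ (isUnit_iff_ne_zero.mpr hdet)]
        using h3
  have := (hjoin.map hfc).mono him
  simpa [hf] using this
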